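/- Let A = ⟨Q, Σ, δ⟩ be an n-state automaton of rank r (the minimal cardinality of Qw over all words w is r). For words w_1,...,w_k let P(w_1,...,w_k) be the set of pairs {x,y} with x ≠ y such that xw_i = yw_i for some i, and let p(k) be the maximum cardinality of P(w_1,...,w_k) over all choices of k words. Then for each 2 ≤ m ≤ r there exists a Frankl-Pin sequence of m-subsets of length p(⌊(r-m+3)/2⌋). -/

import Mathlib

lemma my_exists_idem {α : Type*} [Finite α] (g : α → α) :
    ∃ n, 0 < n ∧ ∀ q, g^[n] (g^[n] q) = g^[n] q := by
  obtain ⟨a, b, hab, heq⟩ := Finite.exists_ne_map_eq_of_infinite (fun n : ℕ => g^[n + 1])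
  wlog hlt : a < b generalizing a b
  · exact this b a hab.symm heq.symm (by omega)
  set i := a + 1 with hi
  set d := b - a with hd
  have hdpos : 0 < d := by omega
  have step : ∀ q, g^[i + d] q = g^[i] q := by
    intro q
    have : i + d = b + 1 := by omega
    rw [this]
    exact congrFun heq.symm q
  have shift : ∀ c q, g^[c + (i + d)] q = g^[c + i] q := by
    intro c q
    rw [Function.iterate_add_apply, step, ← Function.iterate_add_apply]
  have multi : ∀ t c q, g^[c + i + t * d] q = g^[c + i] q := by
    intro t
    induction t with
    | zero => simp
    | succ t ih =>
      intro c q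
      have h1 : c + i + (t + 1) * d = (c + t * d) + (i + d) := by ring
      rw [h1, shift, ← ih c q]
      congr 1
      ring
  refine ⟨i * d, by positivity, fun q => ?_⟩
  have h2 : g^[i * d + i * d] q = g^[i * d] (g^[i * d] q) := Function.iterate_add_apply g _ _ q
  rw [← h2]
  have h3 : i * d + i * d = (i * (d - 1)) + i + i * d := by
    rcases d with _ | d'
    · omega
    · simp only [Nat.add_sub_cancel]; ring
  rw [h3, multi]
  congr 1
  rcases d with _ | d'
  · omega
  · simp only [Nat.add_sub_cancel]; ring

section Core

variable {Q σ : Type*} [Fintype Q] [DecidableEq Q] (δ : Q → σ → Q)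

/-- `u` repeated `n` times. -/
def joinN (u : List σ) : ℕ → List σ
  | 0 => []
  | n + 1 => u ++ joinN u n

lemma foldl_joinN (u : List σ) : ∀ (n : ℕ) (q : Q),
    (joinN u n).foldl δ q = (fun q => u.foldl δ q)^[n] q := by
  intro n
  induction n with
  | zero => intro q; rfl
  | succ n ih =>
    intro q
    show ((u ++ joinN u n).foldl δ q) = _
    rw [List.foldl_append, ih]
    rw [Function.iterate_succ_apply]

lemma core_lemma (r : ℕ)
    (hr2 : ∀ w : List σ, r ≤ (Finset.univ.image (fun q => w.foldl δ q)).card) :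
    ∀ (l : List (List σ × Finset Q)) (e : List σ)
      (_ : ∀ q : Q, e.foldl δ (e.foldl δ q) = e.foldl δ q) (E : Finset Q),
    ∃ Z : Finset Q,
      r ≤ Z.card + E.card + (l.map (fun x => x.2.card)).sum ∧
      (∀ z ∈ Z, e.foldl δ z = z) ∧
      (∀ z ∈ Z, z ∉ E) ∧
      (∀ z ∈ Z, ∀ z' ∈ Z, ∀ x ∈ l, x.1.foldl δ z = x.1.foldl δ z' → z = z') ∧
      (∀ z ∈ Z, ∀ x ∈ l, x.1.foldl δ z ∉ x.2) := by
  intro l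
  induction l with
  | nil =>
    intro e he E
    refine ⟨(Finset.univ.image (fun q => e.foldl δ q)) \ E, ?_, ?_, ?_, ?_, ?_⟩
    · simp only [List.map_nil, List.sum_nil, Nat.add_zero]
      calc r ≤ (Finset.univ.image (fun q => e.foldl δ q)).card := hr2 e
        _ ≤ _ + E.card := Finset.card_le_card_sdiff_add_card
    · intro z hz
      obtain ⟨q, -, rfl⟩ := Finset.mem_image.mp (Finset.mem_sdiff.mp hz).1
      exact he q
    · intro z hz; exact (Finset.mem_sdiff.mp hz).2
    · intro z _ z' _ x hx; exact absurd hx List.not_mem_nil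
    · intro z _ x hx; exact absurd hx List.not_mem_nil
  | cons hd tl ih =>
    intro e he E
    obtain ⟨w, F⟩ := hd
    set g : Q → Q := fun q => (e ++ w ++ e).foldl δ q with hg
    obtain ⟨nn, hnpos, hidem⟩ := my_exists_idem g
    obtain ⟨n0, rfl⟩ : ∃ n0, nn = n0 + 1 := ⟨nn - 1, by omega⟩
    set f : List σ := joinN (e ++ w ++ e) (n0 + 1) with hf
    have hfact : ∀ q : Q, f.foldl δ q = g^[n0 + 1] q := fun q => foldl_joinN δ _ _ q
    -- g applied: g q = e (w (e q))
    have hgapp : ∀ q : Q, g q = e.foldl δ (w.foldl δ (e.foldl δ q)) := by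
      intro q
      show (e ++ w ++ e).foldl δ q = _
      rw [List.foldl_append, List.foldl_append]
    -- e fixes iterates of g (≥ 1)
    have hefix_iter : ∀ (j : ℕ) (q : Q), e.foldl δ (g^[j + 1] q) = g^[j + 1] q := by
      intro j q
      rw [Function.iterate_succ_apply']
      rw [hgapp]
      exact he _
    have he' : ∀ q : Q, f.foldl δ (f.foldl δ q) = f.foldl δ q := by
      intro q; rw [hfact, hfact]; exact hidem q
    -- fixed by f → fixed by e
    have hfe : ∀ z : Q, f.foldl δ z = z → e.foldl δ z = z := by
      intro z hz
      conv_lhs => rw [← hz, hfact]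
      rw [hefix_iter, ← hfact, hz]
    -- pairwise property for w
    have hpair : ∀ z z' : Q, f.foldl δ z = z → f.foldl δ z' = z' →
        w.foldl δ z = w.foldl δ z' → z = z' := by
      intro z z' hz hz' hww
      have hge : g z = g z' := by
        rw [hgapp, hgapp, hfe z hz, hfe z' hz', hww]
      calc z = f.foldl δ z := hz.symm
        _ = g^[n0] (g z) := by rw [hfact, Function.iterate_succ_apply]
        _ = g^[n0] (g z') := by rw [hge]
        _ = f.foldl δ z' := by rw [hfact, Function.iterate_succ_apply]
        _ = z' := hz'
    -- tail word for value avoidance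
    set tail : List σ := e ++ joinN (e ++ w ++ e) n0 with htail
    have himg : ∀ z : Q, f.foldl δ z = z → w.foldl δ z ∈ F →
        z ∈ F.image (fun y => tail.foldl δ y) := by
      intro z hz hw
      have hz2 : z = tail.foldl δ (w.foldl δ z) := by
        have h1 : tail.foldl δ (w.foldl δ z) = (joinN (e ++ w ++ e) n0).foldl δ
            (e.foldl δ (w.foldl δ z)) := by rw [htail, List.foldl_append]
        rw [h1, foldl_joinN]
        have h2 : e.foldl δ (w.foldl δ z) = g z := by
          rw [hgapp, hfe z hz]
        rw [h2, ← Function.iterate_succ_apply, ← hfact, hz]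
      rw [hz2]
      exact Finset.mem_image_of_mem _ hw
    obtain ⟨Z, hcard, hfix, hE, hpw, hval⟩ :=
      ih f he' (E ∪ F.image (fun y => tail.foldl δ y))
    refine ⟨Z, ?_, fun z hz => hfe z (hfix z hz), ?_, ?_, ?_⟩
    · simp only [List.map_cons, List.sum_cons]
      have h1 : (E ∪ F.image (fun y => tail.foldl δ y)).card ≤ E.card + F.card :=
        le_trans (Finset.card_union_le _ _) (by
          have := Finset.card_image_le (s := F) (f := fun y => tail.foldl δ y)
          omega)
      omega
    · intro z hz
      have := hE z hz
      intro hzE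
      exact this (Finset.mem_union_left _ hzE)
    · intro z hz z' hz' x hx
      rcases List.mem_cons.mp hx with rfl | hx
      · exact hpair z z' (hfix z hz) (hfix z' hz')
      · exact hpw z hz z' hz' x hx
    · intro z hz x hx
      rcases List.mem_cons.mp hx with rfl | hx
      · intro hmem
        exact hE z hz (Finset.mem_union_right _ (himg z (hfix z hz) hmem))
      · exact hval z hz x hx

end Core

set_option linter.unusedSectionVars false
set_option linter.unusedVariables false

section FP

variable {Q σ : Type*} [Fintype Q] [DecidableEq Q]

def fpSS (δ : Q → σ → Q) {k : ℕ} (ws : Fin k → List σ) (T : Finset Q) : Finset (Fin k) :=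
  Finset.univ.filter (fun j => (T.image (fun q => (ws j).foldl δ q)).card = 1)

noncomputable def fpkf (δ : Q → σ → Q) {k : ℕ} (ws : Fin k → List σ) (T : Finset Q) : ℕ :=
  if h : (fpSS δ ws T).Nonempty then (((fpSS δ ws T).min' h : Fin k) : ℕ) else 0

lemma merged_pair_iff (δ : Q → σ → Q) (w : List σ) (x y : Q) :
    ((({x, y} : Finset Q).image (fun q => w.foldl δ q)).card = 1) ↔
      w.foldl δ x = w.foldl δ y := by
  rw [Finset.image_insert, Finset.image_singleton]
  constructor
  · intro h
    obtain ⟨a, ha⟩ := Finset.card_eq_one.mp h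
    have hx : w.foldl δ x ∈ ({a} : Finset Q) := ha ▸ Finset.mem_insert_self _ _
    have hy : w.foldl δ y ∈ ({a} : Finset Q) :=
      ha ▸ Finset.mem_insert_of_mem (Finset.mem_singleton_self _)
    rw [Finset.mem_singleton.mp hx, Finset.mem_singleton.mp hy]
  · intro h
    rw [h, Finset.insert_eq_self.mpr (Finset.mem_singleton_self _)]
    exact Finset.card_singleton _


lemma build_M (δ : Q → σ → Q) {r m k : ℕ} (hm2 : 2 ≤ m) (hmr : m ≤ r)
    (hr2 : ∀ w : List σ, r ≤ (Finset.univ.image (fun q => w.foldl δ q)).card)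
    (hkk : 2 * k ≤ r - m + 3) (ws : Fin k → List σ)
    {T : Finset Q} (hT2 : T.card = 2)
    (hTm : ∃ i, (T.image (fun q => (ws i).foldl δ q)).card = 1) :
    ∃ M : Finset Q, M.card = m ∧ T ⊆ M ∧
      ∀ T' : Finset Q, T'.card = 2 → T' ⊆ M → T' ≠ T →
        ∀ s : Fin k, (T'.image (fun q => (ws s).foldl δ q)).card = 1 →
          (s : ℕ) < fpkf δ ws T := by
  classical
  obtain ⟨x, y, hxy, rfl⟩ := Finset.card_eq_two.mp hT2
  have hne : (fpSS δ ws ({x, y} : Finset Q)).Nonempty := by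
    obtain ⟨i, hi⟩ := hTm
    exact ⟨i, Finset.mem_filter.mpr ⟨Finset.mem_univ _, hi⟩⟩
  set j0 : Fin k := (fpSS δ ws ({x, y} : Finset Q)).min' hne with hj0
  have hj0mem : (({x, y} : Finset Q).image (fun q => (ws j0).foldl δ q)).card = 1 :=
    (Finset.mem_filter.mp (Finset.min'_mem _ hne)).2
  have hkfT : fpkf δ ws ({x, y} : Finset Q) = (j0 : ℕ) := dif_pos hne
  have hmerge : (ws j0).foldl δ x = (ws j0).foldl δ y := (merged_pair_iff δ _ x y).mp hj0mem
  have hkpos : 0 < k := j0.pos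
  set Sgt : Finset (Fin k) := Finset.univ.filter (fun s : Fin k => (j0 : ℕ) < (s : ℕ)) with hSgt
  set l : List (List σ × Finset Q) :=
    (ws j0, ({(ws j0).foldl δ x} : Finset Q)) ::
      Sgt.toList.map (fun s => (ws s, ({(ws s).foldl δ x, (ws s).foldl δ y} : Finset Q)))
    with hl
  have hSgtcard : Sgt.card ≤ k - 1 := by
    have hsub : Sgt ⊆ Finset.univ.erase j0 := by
      intro s hs
      have hlt := (Finset.mem_filter.mp hs).2
      refine Finset.mem_erase.mpr ⟨?_, Finset.mem_univ _⟩
      intro h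
      rw [h] at hlt
      exact lt_irrefl _ hlt
    calc Sgt.card ≤ (Finset.univ.erase j0).card := Finset.card_le_card hsub
      _ = Finset.univ.card - 1 := Finset.card_erase_of_mem (Finset.mem_univ _)
      _ = k - 1 := by rw [Finset.card_univ, Fintype.card_fin]
  have hsum : (l.map (fun x => x.2.card)).sum ≤ 1 + 2 * (k - 1) := by
    rw [hl]
    simp only [List.map_cons, List.sum_cons, List.map_map]
    have h1 : (({(ws j0).foldl δ x} : Finset Q)).card = 1 := Finset.card_singleton _
    have h2 : ∀ c ∈ Sgt.toList.map ((fun x => x.2.card) ∘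
        (fun s => (ws s, ({(ws s).foldl δ x, (ws s).foldl δ y} : Finset Q)))), c ≤ 2 := by
      intro c hc
      obtain ⟨s, hs, rfl⟩ := List.mem_map.mp hc
      exact Finset.card_insert_le _ _ |>.trans (by simp)
    have h3 := List.sum_le_card_nsmul _ 2 h2
    rw [List.length_map, Finset.length_toList] at h3
    have h4 : Sgt.card • 2 = 2 * Sgt.card := by rw [smul_eq_mul]; ring
    omega
  obtain ⟨Z, hcard, _, _, hpw, hval⟩ := core_lemma δ r hr2 l [] (fun q => rfl) ∅
  rw [Finset.card_empty] at hcard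
  have hZm : m - 2 ≤ Z.card := by omega
  obtain ⟨Z', hZ'sub, hZ'card⟩ := Finset.exists_subset_card_eq hZm
  have hheadmem : (ws j0, ({(ws j0).foldl δ x} : Finset Q)) ∈ l := List.mem_cons_self
  have hmem_gt : ∀ s : Fin k, (j0 : ℕ) < (s : ℕ) →
      (ws s, ({(ws s).foldl δ x, (ws s).foldl δ y} : Finset Q)) ∈ l := by
    intro s hs
    exact List.mem_cons_of_mem _ (List.mem_map_of_mem
      (Finset.mem_toList.mpr (Finset.mem_filter.mpr ⟨Finset.mem_univ _, hs⟩)))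
  -- conditions
  have cond1 : ∀ s : Fin k, (j0 : ℕ) ≤ (s : ℕ) → ∀ z ∈ Z', ∀ z' ∈ Z',
      (ws s).foldl δ z = (ws s).foldl δ z' → z = z' := by
    intro s hs z hz z' hz' heq
    rcases eq_or_lt_of_le hs with h | h
    · have hsj : s = j0 := Fin.ext h.symm
      exact hpw z (hZ'sub hz) z' (hZ'sub hz') _ hheadmem (by rw [hsj] at heq; exact heq)
    · exact hpw z (hZ'sub hz) z' (hZ'sub hz') _ (hmem_gt s h) heq
  have cond2 : ∀ s : Fin k, (j0 : ℕ) ≤ (s : ℕ) → ∀ z ∈ Z',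
      (ws s).foldl δ z ≠ (ws s).foldl δ x ∧ (ws s).foldl δ z ≠ (ws s).foldl δ y := by
    intro s hs z hz
    rcases eq_or_lt_of_le hs with h | h
    · have hsj : s = j0 := Fin.ext h.symm
      subst hsj
      have := hval z (hZ'sub hz) _ hheadmem
      simp only [Finset.mem_singleton] at this
      exact ⟨this, by rw [← hmerge]; exact this⟩
    · have := hval z (hZ'sub hz) _ (hmem_gt s h)
      simp only [Finset.mem_insert, Finset.mem_singleton] at this
      push_neg at this
      exact this
  have hdisj : ∀ z ∈ Z', z ≠ x ∧ z ≠ y := by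
    intro z hz
    have h := cond2 j0 le_rfl z hz
    constructor
    · intro h'; exact h.1 (by rw [h'])
    · intro h'; exact h.2 (by rw [h'])
  set M : Finset Q := ({x, y} : Finset Q) ∪ Z' with hM
  have hMdisj : Disjoint ({x, y} : Finset Q) Z' := by
    rw [Finset.disjoint_left]
    intro a ha haZ
    rcases Finset.mem_insert.mp ha with rfl | ha'
    · exact (hdisj a haZ).1 rfl
    · exact (hdisj a haZ).2 (Finset.mem_singleton.mp ha')
  have hMcard : M.card = m := by
    rw [hM, Finset.card_union_of_disjoint hMdisj, hT2, hZ'card]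
    omega
  refine ⟨M, hMcard, Finset.subset_union_left, ?_⟩
  intro T' hT'2 hsub hneT s hmerge'
  obtain ⟨a, b, hab, rfl⟩ := Finset.card_eq_two.mp hT'2
  have hab' : (ws s).foldl δ a = (ws s).foldl δ b := (merged_pair_iff δ _ a b).mp hmerge'
  rw [hkfT]
  by_contra hcon
  push_neg at hcon
  have hsge : (j0 : ℕ) ≤ (s : ℕ) := hcon
  have ha : a ∈ M := hsub (Finset.mem_insert_self _ _)
  have hb : b ∈ M := hsub (Finset.mem_insert_of_mem (Finset.mem_singleton_self _))
  rcases Finset.mem_union.mp ha with haxy | haZ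
  · rcases Finset.mem_union.mp hb with hbxy | hbZ
    · -- both in {x,y}: T' = T
      apply hneT
      have hsub2 : ({a, b} : Finset Q) ⊆ ({x, y} : Finset Q) := by
        intro c hc
        rcases Finset.mem_insert.mp hc with rfl | hc'
        · exact haxy
        · rw [Finset.mem_singleton.mp hc']; exact hbxy
      exact Finset.eq_of_subset_of_card_le hsub2 (by rw [hT2, hT'2])
    · -- a ∈ {x,y}, b ∈ Z'
      have h2 := cond2 s hsge b hbZ
      rcases Finset.mem_insert.mp haxy with rfl | ha'
      · exact h2.1 hab'.symm
      · rw [Finset.mem_singleton.mp ha'] at hab'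
        exact h2.2 hab'.symm
  · rcases Finset.mem_union.mp hb with hbxy | hbZ
    · have h2 := cond2 s hsge a haZ
      rcases Finset.mem_insert.mp hbxy with rfl | hb'
      · exact h2.1 hab'
      · rw [Finset.mem_singleton.mp hb'] at hab'
        exact h2.2 hab'
    · exact hab (cond1 s hsge a haZ b hbZ hab')

end FP


/-- Proposition 1: If `A` is an `n`-state automaton of rank `r`, then for each `2 ≤ m ≤ r`
there exists an `m`-subset Frankl-Pin sequence of length `p(⌊(r-m+3)/2⌋)`, where `p(k)` is
the maximal cardinality of the set `P(w₁,…,w_k)` of pairs merged by one of `k` words. -/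
theorem frankl_pin_seq_exists {Q σ : Type*} [Fintype Q] [DecidableEq Q] (δ : Q → σ → Q)
    (n r : ℕ) (hn : Fintype.card Q = n)
    (hr : IsLeast {c | ∃ w : List σ, (Finset.univ.image (fun q => w.foldl δ q)).card = c} r)
    (m : ℕ) (hm2 : 2 ≤ m) (hmr : m ≤ r)
    (p : ℕ)
    (hp : IsGreatest {c | ∃ ws : Fin ((r - m + 3) / 2) → List σ,
        (Finset.univ.filter (fun R : Finset Q => R.card = 2 ∧
          ∃ i, (R.image (fun q => (ws i).foldl δ q)).card = 1)).card = c} p) :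
    ∃ M R : Fin p → Finset Q, (∀ i, (M i).card = m) ∧ (∀ i, (R i).card = 2) ∧
      (∀ i, R i ⊆ M i) ∧ ∀ i j : Fin p, j < i → ¬ R i ⊆ M j := by
  classical
  have hr2 : ∀ w : List σ, r ≤ (Finset.univ.image (fun q => w.foldl δ q)).card :=
    fun w => hr.2 ⟨w, rfl⟩
  have hkk : 2 * ((r - m + 3) / 2) ≤ r - m + 3 := by omega
  set k := (r - m + 3) / 2 with hkdef
  obtain ⟨ws, hws⟩ := hp.1
  set Pset : Finset (Finset Q) := Finset.univ.filter (fun R : Finset Q => R.card = 2 ∧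
      ∃ i, (R.image (fun q => (ws i).foldl δ q)).card = 1) with hPdef
  set rel : Finset Q → Finset Q → Prop := fun A B => fpkf δ ws A ≤ fpkf δ ws B with hrel
  haveI hdec : DecidableRel rel := fun a b => Nat.decLe _ _
  haveI : IsTotal (Finset Q) rel := ⟨fun a b => Nat.le_total _ _⟩
  haveI : IsTrans (Finset Q) rel := ⟨fun a b c => Nat.le_trans⟩
  set L := List.insertionSort rel Pset.toList with hL
  have hperm : List.Perm L Pset.toList := List.perm_insertionSort rel _
  have hlen : L.length = p := by rw [hperm.length_eq, Finset.length_toList, hws]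
  have hnodup : L.Nodup := hperm.nodup_iff.mpr Pset.nodup_toList
  have hsorted : L.Pairwise rel := List.pairwise_insertionSort rel _
  set Rf : Fin p → Finset Q := fun i => L.get (Fin.cast hlen.symm i) with hRf
  have hRmem : ∀ i, Rf i ∈ Pset := fun i =>
    Finset.mem_toList.mp (hperm.mem_iff.mp (by apply List.get_mem))
  have hRprop : ∀ i, (Rf i).card = 2 ∧
      ∃ s, ((Rf i).image (fun q => (ws s).foldl δ q)).card = 1 :=
    fun i => (Finset.mem_filter.mp (hRmem i)).2
  have main : ∀ i : Fin p, ∃ M : Finset Q, M.card = m ∧ Rf i ⊆ M ∧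
      ∀ T' : Finset Q, T'.card = 2 → T' ⊆ M → T' ≠ Rf i →
        ∀ s : Fin k, (T'.image (fun q => (ws s).foldl δ q)).card = 1 →
          (s : ℕ) < fpkf δ ws (Rf i) :=
    fun i => build_M δ hm2 hmr hr2 hkk ws (hRprop i).1 (hRprop i).2
  choose Mf hM1 hM2 hM3 using main
  refine ⟨Mf, Rf, hM1, fun i => (hRprop i).1, hM2, ?_⟩
  intro i j hji hsub
  have hne : Rf i ≠ Rf j := by
    intro h
    have h2 := (hnodup.get_inj_iff).mp h
    have h3 : (i : ℕ) = (j : ℕ) := by simpa using congrArg Fin.val h2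
    omega
  have hneS : (fpSS δ ws (Rf i)).Nonempty := by
    obtain ⟨s, hs⟩ := (hRprop i).2
    exact ⟨s, Finset.mem_filter.mpr ⟨Finset.mem_univ _, hs⟩⟩
  have hkfi : fpkf δ ws (Rf i) = (((fpSS δ ws (Rf i)).min' hneS : Fin k) : ℕ) := dif_pos hneS
  have hminmem := Finset.min'_mem _ hneS
  have hminmerge : ((Rf i).image
      (fun q => (ws ((fpSS δ ws (Rf i)).min' hneS)).foldl δ q)).card = 1 :=
    (Finset.mem_filter.mp hminmem).2
  have hlt := hM3 j (Rf i) (hRprop i).1 hsub hne _ hminmerge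
  have hle : rel (Rf j) (Rf i) := hsorted.rel_get_of_lt (by
    show (Fin.cast hlen.symm j) < (Fin.cast hlen.symm i)
    simpa using hji)
  have hle2 : fpkf δ ws (Rf j) ≤ fpkf δ ws (Rf i) := hle
  rw [hkfi] at hle2
  omega
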